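/- Let C be a subgroup of G = Z2^{k1} × Z4^{k2} × Q8^{k3} such that Φ(C) is a Hadamard code and let a, b, c ∈ C be elements of order 4 such that a^2 = u, and b^2 = c^2 = [b, c] with b^2 ∉ {e, u}. Then [a, b] = e or [a, c] = e or [a, bc] = e. -/

import Mathlib

/-- The group G = Z2^{k1} × Z4^{k2} × Q8^{k3}. -/
abbrev Gq (k1 k2 k3 : ℕ) : Type :=
  (Fin k1 → Multiplicative (ZMod 2)) × (Fin k2 → Multiplicative (ZMod 4)) ×
    (Fin k3 → QuaternionGroup 2)

/-- The Gray map Φ : Q8 → Z2⁴ : 1 ↦ 0000, a ↦ 0101, a² ↦ 1111, a³ ↦ 1010,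
b ↦ 0110, a³b ↦ 0011, a²b ↦ 1001, ab ↦ 1100 (here b = xa 0, so ab = xa 3, etc.). -/
def grayQ8 : QuaternionGroup 2 → Fin 4 → ZMod 2
  | QuaternionGroup.a i =>
      if i = 0 then ![0, 0, 0, 0] else if i = 1 then ![0, 1, 0, 1]
      else if i = 2 then ![1, 1, 1, 1] else ![1, 0, 1, 0]
  | QuaternionGroup.xa i =>
      if i = 0 then ![0, 1, 1, 0] else if i = 1 then ![0, 0, 1, 1]
      else if i = 2 then ![1, 0, 0, 1] else ![1, 1, 0, 0]

/-- The Gray map φ : Z4 → Z2² : 0 ↦ 00, 1 ↦ 01, 2 ↦ 11, 3 ↦ 10. -/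
def grayZ4 : ZMod 4 → Fin 2 → ZMod 2 := fun x =>
  if x = 0 then ![0, 0] else if x = 1 then ![0, 1] else if x = 2 then ![1, 1] else ![1, 0]

/-- The componentwise Gray map on G = Z2^{k1} × Z4^{k2} × Q8^{k3}. -/
def grayG {k1 k2 k3 : ℕ} (x : Gq k1 k2 k3) :
    (Fin k1 → ZMod 2) × (Fin k2 → Fin 2 → ZMod 2) × (Fin k3 → Fin 4 → ZMod 2) :=
  (fun i => Multiplicative.toAdd (x.1 i),
   fun j => grayZ4 (Multiplicative.toAdd (x.2.1 j)),
   fun j => grayQ8 (x.2.2 j))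

/-- Hamming weight of the Gray image of an element of G. -/
def wtG {k1 k2 k3 : ℕ} (x : Gq k1 k2 k3) : ℕ :=
  (Finset.univ.filter fun i => (grayG x).1 i ≠ 0).card
    + ∑ j : Fin k2, (Finset.univ.filter fun b => (grayG x).2.1 j b ≠ 0).card
    + ∑ j : Fin k3, (Finset.univ.filter fun b => (grayG x).2.2 j b ≠ 0).card

/-- The element u of G whose Gray image is the all-ones vector. -/
def uG (k1 k2 k3 : ℕ) : Gq k1 k2 k3 :=
  (fun _ => Multiplicative.ofAdd (1 : ZMod 2),
   fun _ => Multiplicative.ofAdd (2 : ZMod 4),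
   fun _ => QuaternionGroup.a 2)

open scoped commutatorElement


lemma z2_comm' : ∀ x y : Multiplicative (ZMod 2), x * y * x⁻¹ * y⁻¹ = 1 := by decide

lemma z4_comm' : ∀ x y : Multiplicative (ZMod 4), x * y * x⁻¹ * y⁻¹ = 1 := by decide

lemma z2_sq' : ∀ x : Multiplicative (ZMod 2), x * x = 1 := by decide

lemma q8_mul_self : ∀ x : QuaternionGroup 2, x * x = 1 ∨ x * x = QuaternionGroup.a 2 := by decide

lemma q8_comm' : ∀ x y : QuaternionGroup 2,
    x * y * x⁻¹ * y⁻¹ = 1 ∨ x * y * x⁻¹ * y⁻¹ = QuaternionGroup.a 2 := by decide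

lemma q8_comm_ne : ∀ x y : QuaternionGroup 2,
    x * y * x⁻¹ * y⁻¹ = QuaternionGroup.a 2 → y * y = QuaternionGroup.a 2 := by decide

lemma q8_a2_comm : ∀ y : QuaternionGroup 2,
    QuaternionGroup.a 2 * y = y * QuaternionGroup.a 2 := by decide

lemma q8_card : ∀ q : QuaternionGroup 2, (q = 1 ∨ q = QuaternionGroup.a 2) →
    (Finset.univ.filter fun b : Fin 4 => grayQ8 q b ≠ 0).card
      = if q = QuaternionGroup.a 2 then 4 else 0 := by decide

lemma wt_special {k1 k2 k3 : ℕ} (x : Gq k1 k2 k3) (h1 : x.1 = 1) (h2 : x.2.1 = 1)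
    (h3 : ∀ j, x.2.2 j = 1 ∨ x.2.2 j = QuaternionGroup.a 2) :
    wtG x = 4 * (Finset.univ.filter fun j => x.2.2 j = QuaternionGroup.a 2).card := by
  have e3 : ∀ j : Fin k3, (Finset.univ.filter fun b => grayQ8 (x.2.2 j) b ≠ 0).card
      = if x.2.2 j = QuaternionGroup.a 2 then 4 else 0 := fun j => q8_card _ (h3 j)
  have hz : (Finset.univ.filter fun b : Fin 2 => grayZ4 (0:ZMod 4) b ≠ (0:ZMod 2)).card = 0 := by
    decide
  unfold wtG grayG
  rw [h1, h2]
  simp only [Pi.one_apply, toAdd_one]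
  rw [Finset.sum_congr rfl (fun j _ => e3 j), ← Finset.sum_filter, Finset.sum_const,
    smul_eq_mul]
  simp [hz, Nat.mul_comm]

theorem stmt_19 (k1 k2 k3 : ℕ) (C : Subgroup (Gq k1 k2 k3))
    (n : ℕ) (hn : n = k1 + 2 * k2 + 4 * k3)
    (hHad : ∀ x ∈ C, x ≠ 1 → 2 * wtG x = n ∨ wtG x = n)
    (a b c : Gq k1 k2 k3) (ha : a ∈ C) (hb : b ∈ C) (hc : c ∈ C)
    (ha4 : orderOf a = 4) (hb4 : orderOf b = 4) (hc4 : orderOf c = 4)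
    (hau : a ^ 2 = uG k1 k2 k3)
    (hbc : b ^ 2 = c ^ 2) (hbcc : b ^ 2 = ⁅b, c⁆)
    (hbne : b ^ 2 ≠ 1) (hbnu : b ^ 2 ≠ uG k1 k2 k3) :
    ⁅a, b⁆ = 1 ∨ ⁅a, c⁆ = 1 ∨ ⁅a, b * c⁆ = 1 := by
  classical
  set w := b ^ 2 with hwdef
  have hwmul : w = b * b := by rw [hwdef, pow_two]
  have hwcmul : w = c * c := by rw [hbc, pow_two]
  have hw1 : w.1 = 1 := by
    funext i
    have h : w.1 i = b.1 i * b.1 i := by rw [hwmul]; rfl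
    rw [h]; exact z2_sq' _
  have hw2 : w.2.1 = 1 := by
    funext j
    have h : w.2.1 j = b.2.1 j * c.2.1 j * (b.2.1 j)⁻¹ * (c.2.1 j)⁻¹ := by rw [hbcc]; rfl
    rw [h]; exact z4_comm' _ _
  have hw3 : ∀ j, w.2.2 j = 1 ∨ w.2.2 j = QuaternionGroup.a 2 := by
    intro j
    have h : w.2.2 j = b.2.2 j * b.2.2 j := by rw [hwmul]; rfl
    rw [h]; exact q8_mul_self _
  have hwC : w ∈ C := by rw [hwdef]; exact pow_mem hb 2
  have hwwt : wtG w = 4 * (Finset.univ.filter fun j => w.2.2 j = QuaternionGroup.a 2).card :=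
    wt_special w hw1 hw2 hw3
  have hwcard_le : (Finset.univ.filter fun j => w.2.2 j = QuaternionGroup.a 2).card ≤ k3 := by
    have h := Finset.card_filter_le (Finset.univ : Finset (Fin k3))
      (fun j => w.2.2 j = QuaternionGroup.a 2)
    simpa using h
  have hw_not_n : wtG w ≠ n := by
    intro hwn
    have hk1 : k1 = 0 := by omega
    have hk2 : k2 = 0 := by omega
    have hcard : (Finset.univ.filter fun j => w.2.2 j = QuaternionGroup.a 2).card = k3 := by omega
    have hfu : (Finset.univ.filter fun j => w.2.2 j = QuaternionGroup.a 2) = Finset.univ :=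
      Finset.eq_univ_of_card _ (by rw [hcard]; simp)
    apply hbnu
    refine Prod.ext ?_ (Prod.ext ?_ ?_)
    · funext i; exact absurd i.isLt (by omega)
    · funext i; exact absurd i.isLt (by omega)
    · funext j
      have : j ∈ (Finset.univ.filter fun j => w.2.2 j = QuaternionGroup.a 2) := by
        rw [hfu]; exact Finset.mem_univ j
      simpa [uG] using (Finset.mem_filter.mp this).2
  have hww : 2 * wtG w = n := by
    rcases hHad w hwC hbne with h | h
    · exact h
    · exact absurd h hw_not_n
  have key : ∀ x : Gq k1 k2 k3, x ∈ C → x.1 = 1 → x.2.1 = 1 →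
      (∀ j, x.2.2 j = 1 ∨ x.2.2 j = QuaternionGroup.a 2) →
      (∀ j, x.2.2 j = QuaternionGroup.a 2 → w.2.2 j = QuaternionGroup.a 2) →
      x = 1 ∨ x = w := by
    intro x hxC hx1 hx2 hx3 hsub
    by_cases hx : x = 1
    · exact Or.inl hx
    right
    have hxwt := wt_special x hx1 hx2 hx3
    have hssub : (Finset.univ.filter fun j => x.2.2 j = QuaternionGroup.a 2)
        ⊆ (Finset.univ.filter fun j => w.2.2 j = QuaternionGroup.a 2) := by
      intro j hj
      simp only [Finset.mem_filter, Finset.mem_univ, true_and] at hj ⊢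
      exact hsub j hj
    have hcardle := Finset.card_le_card hssub
    rcases hHad x hxC hx with h | h
    · have hceq : (Finset.univ.filter fun j => w.2.2 j = QuaternionGroup.a 2).card
          ≤ (Finset.univ.filter fun j => x.2.2 j = QuaternionGroup.a 2).card := by omega
      have hfeq := Finset.eq_of_subset_of_card_le hssub hceq
      refine Prod.ext ?_ (Prod.ext ?_ ?_)
      · rw [hx1, hw1]
      · rw [hx2, hw2]
      · funext j
        rcases hx3 j with h1 | h1
        · rcases hw3 j with h2 | h2
          · rw [h1, h2]
          · exfalso
            have hj : j ∈ (Finset.univ.filter fun j => w.2.2 j = QuaternionGroup.a 2) := by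
              simp [h2]
            rw [← hfeq] at hj
            have := (Finset.mem_filter.mp hj).2
            rw [h1] at this
            exact absurd this (by decide)
        · rw [h1, hsub j h1]
    · exfalso
      have hcw0 : (Finset.univ.filter fun j => w.2.2 j = QuaternionGroup.a 2).card = 0 := by
        omega
      apply hbne
      refine Prod.ext ?_ (Prod.ext ?_ ?_)
      · exact hw1
      · exact hw2
      · funext j
        rcases hw3 j with h2 | h2
        · exact h2
        · exfalso
          have hj : j ∈ (Finset.univ.filter fun j => w.2.2 j = QuaternionGroup.a 2) := by
            simp [h2]
          rw [Finset.card_eq_zero] at hcw0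
          rw [hcw0] at hj
          exact absurd hj (Finset.notMem_empty j)
  have main : ∀ y : Gq k1 k2 k3, y ∈ C → (∀ j, y.2.2 j * y.2.2 j = w.2.2 j) →
      ⁅a, y⁆ = 1 ∨ ⁅a, y⁆ = w := by
    intro y hyC hysq
    apply key
    · show a * y * a⁻¹ * y⁻¹ ∈ C
      exact mul_mem (mul_mem (mul_mem ha hyC) (inv_mem ha)) (inv_mem hyC)
    · funext i; exact z2_comm' (a.1 i) (y.1 i)
    · funext j; exact z4_comm' (a.2.1 j) (y.2.1 j)
    · intro j; exact q8_comm' (a.2.2 j) (y.2.2 j)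
    · intro j hj
      rw [← hysq j]
      exact q8_comm_ne (a.2.2 j) (y.2.2 j) hj
  have hysqb : ∀ j, b.2.2 j * b.2.2 j = w.2.2 j := by
    intro j; rw [hwmul]; rfl
  have hysqc : ∀ j, c.2.2 j * c.2.2 j = w.2.2 j := by
    intro j; rw [hwcmul]; rfl
  rcases main b hb hysqb with hgb | hgb
  · exact Or.inl hgb
  rcases main c hc hysqc with hgc | hgc
  · exact Or.inr (Or.inl hgc)
  right; right
  have hab : a * b = w * (b * a) := by
    have h0 : a * b = ⁅a, b⁆ * (b * a) := by group
    rw [hgb] at h0; exact h0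
  have hac : a * c = w * (c * a) := by
    have h0 : a * c = ⁅a, c⁆ * (c * a) := by group
    rw [hgc] at h0; exact h0
  have hcent : ∀ z : Gq k1 k2 k3, w * z = z * w := by
    intro z
    refine Prod.ext ?_ (Prod.ext ?_ ?_)
    · show w.1 * z.1 = z.1 * w.1
      rw [hw1, one_mul, mul_one]
    · show w.2.1 * z.2.1 = z.2.1 * w.2.1
      rw [hw2, one_mul, mul_one]
    · funext j
      show w.2.2 j * z.2.2 j = z.2.2 j * w.2.2 j
      rcases hw3 j with h | h
      · rw [h, one_mul, mul_one]
      · rw [h]; exact q8_a2_comm _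
  have hb4' : b ^ 4 = 1 := by
    have h := pow_orderOf_eq_one b
    rwa [hb4] at h
  have hww1 : w * w = 1 := by
    rw [hwdef, ← pow_add]
    exact hb4'
  have hcomm : a * (b * c) = (b * c) * a := by
    calc a * (b * c) = (a * b) * c := by rw [mul_assoc]
      _ = (w * (b * a)) * c := by rw [hab]
      _ = w * (b * (a * c)) := by rw [mul_assoc, mul_assoc]
      _ = w * (b * (w * (c * a))) := by rw [hac]
      _ = w * ((b * w) * (c * a)) := by rw [mul_assoc]
      _ = w * ((w * b) * (c * a)) := by rw [hcent b]
      _ = (w * w) * (b * (c * a)) := by rw [mul_assoc w b (c * a), ← mul_assoc w w (b * (c * a))]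
      _ = b * (c * a) := by rw [hww1, one_mul]
      _ = (b * c) * a := by rw [mul_assoc]
  rw [commutatorElement_def, hcomm]
  group
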